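/- Let f, g be characteristic functions with f^n = g^n for an integer n ≥ 2, and suppose S_f has finitely many connected components E_{-k},…,E_0,…,E_k with E_{-j} = -E_j and 0 ∈ E₀. Then there exist integers m_1,…,m_k ∈ {0,…,n-1} such that g(x) = f(x) for x ∈ E₀, g(x) = e^{2πi m_j/n} f(x) for x ∈ E_j (j = 1,…,k), and g(x) = e^{-2πi m_j/n} f(x) for x ∈ E_{-j} (j = 1,…,k). -/

import Mathlib

open MeasureTheory Set

/-- The characteristic function of a measure `μ` on `ℝ`: `x ↦ ∫ e^{ixt} dμ(t)`. -/
noncomputable def charFunOf (μ : Measure ℝ) : ℝ → ℂ :=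
  fun x => ∫ t, Complex.exp (x * t * Complex.I) ∂μ

/-- `f` is the characteristic function of some probability measure on `ℝ`. -/
def IsCharFun (f : ℝ → ℂ) : Prop :=
  ∃ μ : Measure ℝ, IsProbabilityMeasure μ ∧ f = charFunOf μ

lemma charFunOf_continuous (μ : Measure ℝ) [IsProbabilityMeasure μ] :
    Continuous (charFunOf μ) := by
  apply continuous_of_dominated (bound := fun _ => (1 : ℝ))
  · intro x
    exact (Complex.continuous_exp.comp (by continuity)).aestronglyMeasurable
  · intro x
    filter_upwards with t
    have : (x : ℂ) * t * Complex.I = ((x * t : ℝ) : ℂ) * Complex.I := by push_cast; ring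
    rw [this, Complex.norm_exp_ofReal_mul_I]
  · exact integrable_const 1
  · filter_upwards with t
    exact Complex.continuous_exp.comp (by continuity)

lemma charFunOf_zero (μ : Measure ℝ) [IsProbabilityMeasure μ] : charFunOf μ 0 = 1 := by
  simp [charFunOf]

lemma charFunOf_neg (μ : Measure ℝ) (x : ℝ) :
    charFunOf μ (-x) = (starRingEnd ℂ) (charFunOf μ x) := by
  rw [charFunOf, charFunOf, ← integral_conj]
  congr 1
  ext t
  rw [← Complex.exp_conj]
  congr 1
  simp [map_mul, Complex.conj_I]

/-- Structure theorem: if `f^n = g^n` and `S_f` has components `E_{-k}, …, E_k` with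
`E_{-j} = -E_j` and `0 ∈ E₀`, then on each `E_j` (`j ≥ 1`), `g = e^{2πi m_j / n} f`,
with `g = f` on `E₀` and the conjugate phase on `E_{-j}`. -/
theorem stmt7 (f g : ℝ → ℂ) (hf : IsCharFun f) (hg : IsCharFun g)
    (n : ℕ) (hn : 2 ≤ n) (hpow : ∀ x, f x ^ n = g x ^ n)
    (k : ℕ) (E : ℤ → Set ℝ)
    (hunion : {x : ℝ | f x ≠ 0} = ⋃ j ∈ Set.Icc (-(k : ℤ)) (k : ℤ), E j)
    (hdisj : ∀ i ∈ Set.Icc (-(k : ℤ)) (k : ℤ), ∀ j ∈ Set.Icc (-(k : ℤ)) (k : ℤ),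
      i ≠ j → Disjoint (E i) (E j))
    (hcomp : ∀ j ∈ Set.Icc (-(k : ℤ)) (k : ℤ), ∀ x ∈ E j,
      E j = connectedComponentIn {y : ℝ | f y ≠ 0} x)
    (hsym : ∀ j : ℤ, E (-j) = -(E j))
    (h0 : (0 : ℝ) ∈ E 0) :
    ∃ m : ℤ → ℕ, (∀ j ∈ Set.Icc (1 : ℤ) (k : ℤ), m j < n) ∧
      (∀ x ∈ E 0, g x = f x) ∧
      (∀ j ∈ Set.Icc (1 : ℤ) (k : ℤ), ∀ x ∈ E j,
        g x = Complex.exp (2 * Real.pi * (m j) / n * Complex.I) * f x) ∧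
      (∀ j ∈ Set.Icc (1 : ℤ) (k : ℤ), ∀ x ∈ E (-j),
        g x = Complex.exp (-(2 * Real.pi * (m j) / n) * Complex.I) * f x) := by
  classical
  obtain ⟨μ, hμ, rfl⟩ := hf
  obtain ⟨ν, hν, rfl⟩ := hg
  set f := charFunOf μ with hfdef
  set g := charFunOf ν with hgdef
  have hn0 : (n : ℕ) ≠ 0 := by omega
  haveI : NeZero n := ⟨hn0⟩
  have hfc : Continuous f := charFunOf_continuous μ
  have hgc : Continuous g := charFunOf_continuous ν
  set S : Set ℝ := {x : ℝ | f x ≠ 0} with hSdef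
  -- g is nonzero on S
  have hgne : ∀ x ∈ S, g x ≠ 0 := by
    intro x hx
    intro h
    apply hx
    have := hpow x
    rw [h, zero_pow hn0] at this
    exact pow_eq_zero_iff hn0 |>.mp this
  set h : ℝ → ℂ := fun x => g x / f x with hhdef
  have hhcont : ContinuousOn h S := by
    exact (hgc.continuousOn).div (hfc.continuousOn) (fun x hx => hx)
  have hhpow : ∀ x ∈ S, h x ^ n = 1 := by
    intro x hx
    simp only [hhdef, div_pow, ← hpow x]
    exact div_self (pow_ne_zero n hx)
  have hmaps : Set.MapsTo h S (↑(Polynomial.nthRootsFinset n (1 : ℂ)) : Set ℂ) := by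
    intro x hx
    simp only [Finset.coe_sort_coe, Finset.mem_coe]
    exact (Polynomial.mem_nthRootsFinset (Nat.pos_of_ne_zero hn0) (1 : ℂ)).mpr (hhpow x hx)
  -- constancy of h on connected components of S
  have hconst : ∀ x₀ ∈ S, ∀ x ∈ connectedComponentIn S x₀, h x = h x₀ := by
    intro x₀ hx₀ x hx
    exact IsPreconnected.constant_of_mapsTo (isPreconnected_connectedComponentIn) (Set.toFinite _).isDiscrete
      (hhcont.mono (connectedComponentIn_subset S x₀))
      (hmaps.mono_left (connectedComponentIn_subset S x₀))
      hx (mem_connectedComponentIn hx₀)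
  have hEsub : ∀ j ∈ Set.Icc (-(k : ℤ)) (k : ℤ), E j ⊆ S := by
    intro j hj
    have h1 : E j ⊆ ⋃ i ∈ Set.Icc (-(k : ℤ)) (k : ℤ), E i := Set.subset_biUnion_of_mem hj
    rwa [← hunion] at h1
  have hf0 : f 0 = 1 := charFunOf_zero μ
  have hg0 : g 0 = 1 := charFunOf_zero ν
  have hfneg : ∀ x : ℝ, f (-x) = (starRingEnd ℂ) (f x) := charFunOf_neg μ
  have hgneg : ∀ x : ℝ, g (-x) = (starRingEnd ℂ) (g x) := charFunOf_neg ν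
  have h0mem : (0 : ℤ) ∈ Set.Icc (-(k : ℤ)) (k : ℤ) := by
    constructor <;> omega
  have h0S : (0 : ℝ) ∈ S := hEsub 0 h0mem h0
  -- g = f on E 0
  have hE0 : ∀ x ∈ E 0, g x = f x := by
    intro x hx
    have hxS : x ∈ S := hEsub 0 h0mem hx
    have hcc := hcomp 0 h0mem 0 h0
    have hx' : x ∈ connectedComponentIn S 0 := by rw [← hcc]; exact hx
    have := hconst 0 h0S x hx'
    have h01 : h 0 = 1 := by simp [hhdef, hf0, hg0]
    rw [h01] at this
    exact (div_eq_one_iff_eq hxS).mp this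
  -- key existence on each E j, j ∈ [1, k]
  have key : ∀ j ∈ Set.Icc (1 : ℤ) (k : ℤ), ∃ mj : ℕ, mj < n ∧
      ∀ x ∈ E j, g x = Complex.exp (2 * Real.pi * mj / n * Complex.I) * f x := by
    intro j hj
    have hjmem : j ∈ Set.Icc (-(k : ℤ)) (k : ℤ) := by
      obtain ⟨h1, h2⟩ := hj
      constructor <;> omega
    rcases (E j).eq_empty_or_nonempty with hE | ⟨x₀, hx₀⟩
    · exact ⟨0, by omega, by simp [hE]⟩
    · have hx₀S : x₀ ∈ S := hEsub j hjmem hx₀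
      have hcc := hcomp j hjmem x₀ hx₀
      have hroot : h x₀ ^ n = 1 := hhpow x₀ hx₀S
      obtain ⟨i, hi, hpow_eq⟩ :=
        (Complex.isPrimitiveRoot_exp n hn0).eq_pow_of_pow_eq_one hroot
      refine ⟨i, hi, ?_⟩
      intro x hx
      have hxS : x ∈ S := hEsub j hjmem hx
      have hx' : x ∈ connectedComponentIn S x₀ := by rw [← hcc]; exact hx
      have hhx : h x = h x₀ := hconst x₀ hx₀S x hx'
      have hval : h x = Complex.exp (2 * Real.pi * i / n * Complex.I) := by
        rw [hhx, ← hpow_eq, ← Complex.exp_nat_mul]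
        congr 1
        push_cast
        ring
      exact (div_eq_iff hxS).mp hval
  choose! m hm1 hm2 using key
  refine ⟨m, hm1, hE0, hm2, ?_⟩
  -- conjugate phase on E (-j)
  intro j hj x hx
  have hxneg : -x ∈ E j := by
    have := hsym j
    rw [this] at hx
    simpa using hx
  have hgx : g (-x) = Complex.exp (2 * Real.pi * (m j) / n * Complex.I) * f (-x) :=
    hm2 j hj (-x) hxneg
  have hconj : (starRingEnd ℂ) (Complex.exp (2 * Real.pi * (m j) / n * Complex.I)) =
      Complex.exp (-(2 * Real.pi * (m j) / n) * Complex.I) := by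
    rw [← Complex.exp_conj]
    congr 1
    have : (2 * Real.pi * (m j) / n * Complex.I : ℂ) =
        ((2 * Real.pi * (m j) / n : ℝ) : ℂ) * Complex.I := by push_cast; ring
    rw [this, map_mul, Complex.conj_ofReal, Complex.conj_I]
    push_cast
    ring
  have hgx' : g x = (starRingEnd ℂ) (g (-x)) := by
    have := hgneg (-x)
    rwa [neg_neg] at this
  calc g x = (starRingEnd ℂ) (g (-x)) := hgx'
    _ = (starRingEnd ℂ) (Complex.exp (2 * Real.pi * (m j) / n * Complex.I)) *
        (starRingEnd ℂ) (f (-x)) := by rw [hgx, map_mul]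
    _ = Complex.exp (-(2 * Real.pi * (m j) / n) * Complex.I) * f x := by
        rw [hconj, ← hfneg (-x), neg_neg]
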